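/- Let (p₁,p₂,p₃) be a weight triple with all pᵢ ≥ 2, and L = L(p₁,p₂,p₃). Write x̄ᵢ := xᵢ + ω where ω is the dualizing element. If x̄₃ + x̄₃ = 0 in L, then p₁ = 2 and p₂ = 2. Moreover, x̄₁ + x̄₂ = 0 is impossible (for any weights pᵢ ≥ 2). -/

import Mathlib

/-- The subgroup of relations defining L(a,b,c). -/
def LRel (a b c : ℕ) : AddSubgroup (ℤ × ℤ × ℤ) :=
  AddSubgroup.closure {((a : ℤ), -(b : ℤ), 0), ((0 : ℤ), (b : ℤ), -(c : ℤ))}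

/-- The rank-one abelian group L(a,b,c) on generators x₁,x₂,x₃ with a·x₁ = b·x₂ = c·x₃. -/
abbrev LGrp (a b c : ℕ) := (ℤ × ℤ × ℤ) ⧸ LRel a b c

def Lx1 (a b c : ℕ) : LGrp a b c := QuotientAddGroup.mk (1, 0, 0)
def Lx2 (a b c : ℕ) : LGrp a b c := QuotientAddGroup.mk (0, 1, 0)
def Lx3 (a b c : ℕ) : LGrp a b c := QuotientAddGroup.mk (0, 0, 1)

/-- Canonical element c⃗ = a·x₁. -/
def Lcan (a b c : ℕ) : LGrp a b c := (a : ℤ) • Lx1 a b c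

/-- Dualizing element ω = c⃗ − (x₁+x₂+x₃). -/
def Lomega (a b c : ℕ) : LGrp a b c :=
  Lcan a b c - (Lx1 a b c + Lx2 a b c + Lx3 a b c)

/-- Dominant element δ⃗ = c⃗ + 2ω. -/
def Ldelta (a b c : ℕ) : LGrp a b c := Lcan a b c + (2 : ℤ) • Lomega a b c

/-- The partial order on L given by the positive cone ℕx₁+ℕx₂+ℕx₃ : u ≤ v iff v−u ∈ ℕx₁+ℕx₂+ℕx₃. -/
def Lle (a b c : ℕ) (u v : LGrp a b c) : Prop :=
  ∃ n1 n2 n3 : ℕ,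
    v - u = (n1 : ℤ) • Lx1 a b c + (n2 : ℤ) • Lx2 a b c + (n3 : ℤ) • Lx3 a b c


lemma mem_LRel {a b c : ℕ} {v : ℤ × ℤ × ℤ} (h : v ∈ LRel a b c) :
    ∃ m n : ℤ, v = (m * a, (n - m) * b, -(n * c)) := by
  let f : ℤ × ℤ →+ ℤ × ℤ × ℤ :=
    AddMonoidHom.mk' (fun p => (p.1 * a, (p.2 - p.1) * b, -(p.2 * c)))
      (by intro p q; simp [Prod.ext_iff]; ring_nf; exact ⟨trivial, trivial, trivial⟩)
  have hle : LRel a b c ≤ f.range := by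
    apply AddSubgroup.closure_le _ |>.2
    rintro x (rfl | rfl)
    · exact ⟨(1, 0), by simp [f, Prod.ext_iff]⟩
    · exact ⟨(0, 1), by simp [f, Prod.ext_iff]⟩
  obtain ⟨⟨m, n⟩, hmn⟩ := hle h
  exact ⟨m, n, hmn.symm⟩

lemma mk_zsmul {A : Type*} [AddCommGroup A] (H : AddSubgroup A) (z : ℤ) (x : A) :
    (QuotientAddGroup.mk (z • x) : A ⧸ H) = z • QuotientAddGroup.mk x :=
  map_zsmul (QuotientAddGroup.mk' H) z x


lemma omega_eq (a b c : ℕ) :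
    Lomega a b c = QuotientAddGroup.mk ((a : ℤ) - 1, -1, -1) := by
  have : ((a : ℤ) - 1, (-1 : ℤ), (-1 : ℤ)) =
      (a : ℤ) • ((1 : ℤ), (0 : ℤ), (0 : ℤ)) - ((1, 0, 0) + (0, 1, 0) + (0, 0, 1)) := by
    simp [Prod.ext_iff]
  rw [Lomega, Lcan, Lx1, Lx2, Lx3, this, QuotientAddGroup.mk_sub,
    QuotientAddGroup.mk_add, QuotientAddGroup.mk_add, mk_zsmul]


/-- With x̄ᵢ = xᵢ + ω: if x̄₃ + x̄₃ = 0 in L(p₁,p₂,p₃) then p₁ = 2 and p₂ = 2;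
    moreover x̄₁ + x̄₂ = 0 is impossible. -/
theorem faithful_action_relations (p1 p2 p3 : ℕ) (h1 : 2 ≤ p1) (h2 : 2 ≤ p2)
    (h3 : 2 ≤ p3) :
    ((Lx3 p1 p2 p3 + Lomega p1 p2 p3) + (Lx3 p1 p2 p3 + Lomega p1 p2 p3) = 0 →
      p1 = 2 ∧ p2 = 2) ∧
    (Lx1 p1 p2 p3 + Lomega p1 p2 p3) + (Lx2 p1 p2 p3 + Lomega p1 p2 p3) ≠ 0 := by
  constructor
  · intro h
    have heq : (Lx3 p1 p2 p3 + Lomega p1 p2 p3) + (Lx3 p1 p2 p3 + Lomega p1 p2 p3)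
        = QuotientAddGroup.mk (2 * (p1 : ℤ) - 2, -2, 0) := by
      rw [omega_eq, Lx3]
      simp only [← QuotientAddGroup.mk_add]
      congr 1
      simp [Prod.ext_iff]; ring
    rw [heq, QuotientAddGroup.eq_zero_iff] at h
    obtain ⟨m, n, hmn⟩ := mem_LRel h
    have e1 : 2 * (p1 : ℤ) - 2 = m * p1 := congrArg Prod.fst hmn
    have e2 : (-2 : ℤ) = (n - m) * p2 := congrArg (fun v => v.2.1) hmn
    have e3 : (0 : ℤ) = -(n * p3) := congrArg (fun v => v.2.2) hmn
    have hb : (2 : ℤ) ≤ (p2 : ℤ) := by exact_mod_cast h2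
    have hc : (2 : ℤ) ≤ (p3 : ℤ) := by exact_mod_cast h3
    have hn : n = 0 := by
      rcases lt_trichotomy n 0 with hk | hk | hk
      · nlinarith
      · exact hk
      · nlinarith
    subst hn
    have hm : m * (p2 : ℤ) = 2 := by linarith
    have hmpos : 1 ≤ m := by nlinarith
    have hmle : m ≤ 1 := by nlinarith
    have hm1 : m = 1 := le_antisymm hmle hmpos
    subst hm1
    constructor
    · have : (p1 : ℤ) = 2 := by linarith
      exact_mod_cast this
    · have : (p2 : ℤ) = 2 := by linarith
      exact_mod_cast this
  · intro h
    have heq : (Lx1 p1 p2 p3 + Lomega p1 p2 p3) + (Lx2 p1 p2 p3 + Lomega p1 p2 p3)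
        = QuotientAddGroup.mk (2 * (p1 : ℤ) - 1, -1, -2) := by
      rw [omega_eq, Lx1, Lx2]
      simp only [← QuotientAddGroup.mk_add]
      congr 1
      simp [Prod.ext_iff]; ring
    rw [heq, QuotientAddGroup.eq_zero_iff] at h
    obtain ⟨m, n, hmn⟩ := mem_LRel h
    have e2 : (-1 : ℤ) = (n - m) * p2 := congrArg (fun v => v.2.1) hmn
    have hb : (2 : ℤ) ≤ (p2 : ℤ) := by exact_mod_cast h2
    rcases lt_trichotomy (n - m) 0 with hk | hk | hk
    · nlinarith
    · rw [hk] at e2; simp at e2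
    · nlinarith
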